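/- Let X ~ Exp(1), c = μσ_d²/(P_max − (μ+1)P_Δ), ρ₂ = (μ+1)P_Δ h + σ_s², ρ₃ = P_max h + σ_s², with h > 0 and P_max > (μ+1)P_Δ > 0. Then for ρ₂ ≤ τ ≤ ρ₃, the conditional probability P[(μσ_d²/X + (μ+1)P_Δ) h + σ_s² < τ | X ≥ c] equals exp(μσ_d²(1/(P_max − (μ+1)P_Δ) − h/(τ − ρ₂))) for τ > ρ₂ (interpreting the expression as 0 when τ = ρ₂), it equals 0 for τ < ρ₂, and equals 1 for τ > ρ₃. -/

import Mathlib

open Real MeasureTheory ProbabilityTheory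

lemma expMeasure_Ioi_aux (a : ℝ) (ha : 0 ≤ a) :
    expMeasure 1 (Set.Ioi a) = ENNReal.ofReal (Real.exp (-a)) := by
  rw [expMeasure, gammaMeasure, withDensity_apply _ measurableSet_Ioi]
  have h1 : ∀ x ∈ Set.Ioi a, gammaPDF 1 1 x = ENNReal.ofReal (Real.exp (-x)) := by
    intro x hx
    have hx0 : (0:ℝ) ≤ x := le_of_lt (lt_of_le_of_lt ha hx)
    have : gammaPDF 1 1 x = exponentialPDF 1 x := rfl
    rw [this, exponentialPDF_of_nonneg hx0]
    norm_num
  rw [setLIntegral_congr_fun measurableSet_Ioi h1]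
  rw [← ofReal_integral_eq_lintegral_ofReal]
  · rw [integral_exp_neg_Ioi]
  · have := exp_neg_integrableOn_Ioi a (one_pos)
    simpa [IntegrableOn] using this
  · filter_upwards with x using (Real.exp_pos _).le

lemma expMeasure_Ici_aux (a : ℝ) (ha : 0 ≤ a) :
    expMeasure 1 (Set.Ici a) = ENNReal.ofReal (Real.exp (-a)) := by
  rw [← expMeasure_Ioi_aux a ha]
  have hac : expMeasure 1 {a} = 0 := by
    rw [expMeasure, gammaMeasure, withDensity_apply _ (measurableSet_singleton a)]
    simp [Measure.restrict_singleton]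
  have : Set.Ici a = Set.Ioi a ∪ {a} := by
    ext x; simp [Set.mem_Ici, Set.mem_Ioi, le_iff_lt_or_eq, or_comm, eq_comm]
  rw [this]
  refine le_antisymm ?_ (measure_mono Set.subset_union_left)
  calc expMeasure 1 (Set.Ioi a ∪ {a}) ≤ expMeasure 1 (Set.Ioi a) + expMeasure 1 {a} :=
        measure_union_le _ _
    _ = expMeasure 1 (Set.Ioi a) := by rw [hac, add_zero]

theorem stmt_4 (μ σd2 σs2 Pmax PΔ h : ℝ)
    (hμ : μ > 0) (hσd : σd2 > 0) (hσs : σs2 > 0) (hh : h > 0)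
    (hPΔ : (μ + 1) * PΔ > 0) (hP : Pmax > (μ + 1) * PΔ) :
    let c := μ * σd2 / (Pmax - (μ + 1) * PΔ)
    let ρ₂ := (μ + 1) * PΔ * h + σs2
    let ρ₃ := Pmax * h + σs2
    let ν := (expMeasure 1)[|{x : ℝ | c ≤ x}]
    ∀ τ : ℝ,
      (ρ₂ < τ → τ ≤ ρ₃ →
        ν {x : ℝ | (μ * σd2 / x + (μ + 1) * PΔ) * h + σs2 < τ} =
          ENNReal.ofReal
            (Real.exp (μ * σd2 * (1 / (Pmax - (μ + 1) * PΔ) - h / (τ - ρ₂))))) ∧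
      (τ = ρ₂ → ν {x : ℝ | (μ * σd2 / x + (μ + 1) * PΔ) * h + σs2 < τ} = 0) ∧
      (τ < ρ₂ → ν {x : ℝ | (μ * σd2 / x + (μ + 1) * PΔ) * h + σs2 < τ} = 0) ∧
      (τ > ρ₃ → ν {x : ℝ | (μ * σd2 / x + (μ + 1) * PΔ) * h + σs2 < τ} = 1) := by
  intro c ρ₂ ρ₃ ν τ
  have hPk : (0:ℝ) < Pmax - (μ + 1) * PΔ := by linarith
  have hμσ : (0:ℝ) < μ * σd2 := mul_pos hμ hσd
  have hc : (0:ℝ) < c := div_pos hμσ hPk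
  have hsset : {x : ℝ | c ≤ x} = Set.Ici c := rfl
  have hms : MeasurableSet {x : ℝ | c ≤ x} := measurableSet_Ici
  have hμs : expMeasure 1 {x : ℝ | c ≤ x} = ENNReal.ofReal (Real.exp (-c)) := by
    rw [hsset]; exact expMeasure_Ici_aux c hc.le
  -- general fact: if τ ≤ ρ₂ then intersection is empty
  have hempty : ∀ τ' : ℝ, τ' ≤ ρ₂ →
      {x : ℝ | c ≤ x} ∩ {x : ℝ | (μ * σd2 / x + (μ + 1) * PΔ) * h + σs2 < τ'} = ∅ := by
    intro τ' hτ'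
    ext x
    simp only [Set.mem_inter_iff, Set.mem_setOf_eq, Set.mem_empty_iff_false, iff_false,
      not_and, not_lt]
    intro hx
    have hx0 : 0 < x := lt_of_lt_of_le hc hx
    have : 0 < μ * σd2 / x := div_pos hμσ hx0
    have : ρ₂ < (μ * σd2 / x + (μ + 1) * PΔ) * h + σs2 := by
      show (μ + 1) * PΔ * h + σs2 < _
      nlinarith
    exact le_of_lt (lt_of_le_of_lt hτ' this)
  constructor
  · -- main case ρ₂ < τ ≤ ρ₃
    intro hτ1 hτ2
    set b := μ * σd2 * h / (τ - ρ₂) with hb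
    have hτρ : (0:ℝ) < τ - ρ₂ := by linarith
    have hbc : c ≤ b := by
      show μ * σd2 / (Pmax - (μ + 1) * PΔ) ≤ μ * σd2 * h / (τ - ρ₂)
      rw [div_le_div_iff₀ hPk hτρ]
      have hle : τ - ρ₂ ≤ (Pmax - (μ + 1) * PΔ) * h := by
        have : ρ₃ = ρ₂ + (Pmax - (μ + 1) * PΔ) * h := by show Pmax * h + σs2 = _; ring
        linarith [hτ2.trans_eq this]
      calc μ * σd2 * (τ - ρ₂) ≤ μ * σd2 * ((Pmax - (μ + 1) * PΔ) * h) := by nlinarith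
        _ = μ * σd2 * h * (Pmax - (μ + 1) * PΔ) := by ring
    have hb0 : 0 < b := lt_of_lt_of_le hc hbc
    have hinter : {x : ℝ | c ≤ x} ∩ {x : ℝ | (μ * σd2 / x + (μ + 1) * PΔ) * h + σs2 < τ}
        = Set.Ioi b := by
      ext x
      simp only [Set.mem_inter_iff, Set.mem_setOf_eq, Set.mem_Ioi]
      constructor
      · rintro ⟨hx1, hx2⟩
        have hx0 : 0 < x := lt_of_lt_of_le hc hx1
        have h1 : μ * σd2 * h / x < τ - ρ₂ := by
          have : μ * σd2 / x * h = μ * σd2 * h / x := by ring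
          show _ < τ - ((μ + 1) * PΔ * h + σs2)
          nlinarith [this]
        rw [div_lt_iff₀ hx0] at h1
        rw [hb, div_lt_iff₀ hτρ]
        nlinarith
      · intro hx
        have hx0 : 0 < x := hb0.trans hx
        refine ⟨hbc.trans hx.le, ?_⟩
        have h1 : μ * σd2 * h < (τ - ρ₂) * x := by
          rw [hb, div_lt_iff₀ hτρ] at hx; nlinarith
        have h2 : μ * σd2 * h / x < τ - ρ₂ := by
          rw [div_lt_iff₀ hx0]; nlinarith
        have h3 : μ * σd2 / x * h = μ * σd2 * h / x := by ring
        show _ + σs2 < τ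
        have : ρ₂ = (μ + 1) * PΔ * h + σs2 := rfl
        nlinarith
    rw [show ν = (expMeasure 1)[|{x : ℝ | c ≤ x}] from rfl,
      ProbabilityTheory.cond_apply hms, hinter, expMeasure_Ioi_aux b hb0.le, hμs,
      ← ENNReal.ofReal_inv_of_pos (Real.exp_pos _), Real.exp_neg c, inv_inv,
      ← ENNReal.ofReal_mul (Real.exp_pos _).le, ← Real.exp_add]
    congr 1
    have : μ * σd2 * (1 / (Pmax - (μ + 1) * PΔ) - h / (τ - ρ₂)) = c - b := by
      rw [hb, mul_sub, mul_one_div, mul_div_assoc]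
      show _ = μ * σd2 / (Pmax - (μ + 1) * PΔ) - _
      ring
    rw [this]; ring
  refine ⟨?_, ?_, ?_⟩
  · intro hτ
    rw [show ν = (expMeasure 1)[|{x : ℝ | c ≤ x}] from rfl, ProbabilityTheory.cond_apply hms,
      hempty τ hτ.le, measure_empty, mul_zero]
  · intro hτ
    rw [show ν = (expMeasure 1)[|{x : ℝ | c ≤ x}] from rfl, ProbabilityTheory.cond_apply hms,
      hempty τ hτ.le, measure_empty, mul_zero]
  · intro hτ
    have hinter : {x : ℝ | c ≤ x} ∩ {x : ℝ | (μ * σd2 / x + (μ + 1) * PΔ) * h + σs2 < τ}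
        = {x : ℝ | c ≤ x} := by
      apply Set.inter_eq_self_of_subset_left
      intro x hx
      have hx1 : c ≤ x := hx
      have hx0 : 0 < x := lt_of_lt_of_le hc hx1
      simp only [Set.mem_setOf_eq]
      have h1 : μ * σd2 / x ≤ μ * σd2 / c := div_le_div_of_nonneg_left hμσ.le hc hx1
      have h2 : μ * σd2 / c = Pmax - (μ + 1) * PΔ := by
        rw [show c = μ * σd2 / (Pmax - (μ + 1) * PΔ) from rfl]
        field_simp
      have h3 : ρ₃ = Pmax * h + σs2 := rfl
      nlinarith
    rw [show ν = (expMeasure 1)[|{x : ℝ | c ≤ x}] from rfl, ProbabilityTheory.cond_apply hms,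
      hinter, hμs, ENNReal.inv_mul_cancel (by simp [Real.exp_pos]) ENNReal.ofReal_ne_top]
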